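/- Let Q, ν, u₁, u₂ : U → E be smooth maps on an open set U ⊆ ℝ × ℝ such that ‖ν k‖ = 1 and ⟪ν k, Dᵢ Q k⟫ = 0 for all k ∈ U and i = 1, 2, and let n₁, n₂ be positive real numbers such that Snell's law holds pointwise: n₂ • (u₂ k − ⟪u₂ k, ν k⟫ • ν k) = n₁ • (u₁ k − ⟪u₁ k, ν k⟫ • ν k) for all k ∈ U. Then for every k ∈ U, n₂ • (⟪D₁ Q k, D₂ u₂ k⟫ − ⟪D₂ Q k, D₁ u₂ k⟫) = n₁ • (⟪D₁ Q k, D₂ u₁ k⟫ − ⟪D₂ Q k, D₁ u₁ k⟫). (Refraction through a smooth surface separating media of refractive indices n₁ and n₂ sends the symplectic form n₁·(dP ∧ du) to n₂·(dP ∧ du).) -/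

import Mathlib

open RealInnerProductSpace

noncomputable section

/-- The Euclidean affine space in which light propagates. -/
abbrev E : Type := EuclideanSpace ℝ (Fin 3)

/-- Partial derivative in the first coordinate direction of `ℝ × ℝ`. -/
def D1 {F : Type*} [NormedAddCommGroup F] [NormedSpace ℝ F] (f : ℝ × ℝ → F) (k : ℝ × ℝ) : F :=
  fderiv ℝ f k (1, 0)

/-- Partial derivative in the second coordinate direction of `ℝ × ℝ`. -/
def D2 {F : Type*} [NormedAddCommGroup F] [NormedSpace ℝ F] (f : ℝ × ℝ → F) (k : ℝ × ℝ) : F :=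
  fderiv ℝ f k (0, 1)

private lemma two_le_top' : (2 : WithTop ℕ∞) ≤ ((⊤:ℕ∞) : WithTop ℕ∞) :=
  le_trans (by norm_num) (WithTop.coe_le_coe.2 (le_top : (2:ℕ∞) ≤ ⊤))

theorem refraction_is_symplectic
    (U : Set (ℝ × ℝ)) (hU : IsOpen U)
    (Q nu u₁ u₂ : ℝ × ℝ → E)
    (hQ : ContDiffOn ℝ (⊤ : ℕ∞) Q U) (hnu : ContDiffOn ℝ (⊤ : ℕ∞) nu U)
    (hu₁ : ContDiffOn ℝ (⊤ : ℕ∞) u₁ U) (hu₂ : ContDiffOn ℝ (⊤ : ℕ∞) u₂ U)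
    (hnunit : ∀ k ∈ U, ‖nu k‖ = 1)
    (horth : ∀ k ∈ U, ⟪nu k, D1 Q k⟫ = 0 ∧ ⟪nu k, D2 Q k⟫ = 0)
    (n₁ n₂ : ℝ) (hn₁ : 0 < n₁) (hn₂ : 0 < n₂)
    (hsnell : ∀ k ∈ U,
      n₂ • (u₂ k - ⟪u₂ k, nu k⟫ • nu k) = n₁ • (u₁ k - ⟪u₁ k, nu k⟫ • nu k)) :
    ∀ k ∈ U,
      n₂ • (⟪D1 Q k, D2 u₂ k⟫ - ⟪D2 Q k, D1 u₂ k⟫) =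
      n₁ • (⟪D1 Q k, D2 u₁ k⟫ - ⟪D2 Q k, D1 u₁ k⟫) := by
  intro k hk
  have hkU : U ∈ nhds k := hU.mem_nhds hk
  -- basic differentiability
  have hQk : ContDiffAt ℝ (⊤:ℕ∞) Q k := hQ.contDiffAt hkU
  have hQd : DifferentiableAt ℝ Q k := hQk.differentiableAt (by simp)
  have hnud : DifferentiableAt ℝ nu k := (hnu.contDiffAt hkU).differentiableAt (by simp)
  have hu₁d : DifferentiableAt ℝ u₁ k := (hu₁.contDiffAt hkU).differentiableAt (by simp)
  have hu₂d : DifferentiableAt ℝ u₂ k := (hu₂.contDiffAt hkU).differentiableAt (by simp)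
  -- the derivative of Q is smooth on U
  have hQ' : ContDiffOn ℝ (⊤:ℕ∞) (fun x => fderiv ℝ Q x) U :=
    hQ.fderiv_of_isOpen hU (by exact_mod_cast le_top)
  have hQ'd : DifferentiableAt ℝ (fun x => fderiv ℝ Q x) k :=
    (hQ'.contDiffAt hkU).differentiableAt (by simp)
  -- D1 Q and D2 Q are differentiable at k
  have hD1Qd : DifferentiableAt ℝ (fun x => D1 Q x) k := by
    simp only [D1]
    exact hQ'd.clm_apply (differentiableAt_const _)
  have hD2Qd : DifferentiableAt ℝ (fun x => D2 Q x) k := by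
    simp only [D2]
    exact hQ'd.clm_apply (differentiableAt_const _)
  -- derivative of D1 Q, D2 Q in terms of the second derivative
  have hclm : ∀ v w : ℝ × ℝ,
      fderiv ℝ (fun x => fderiv ℝ Q x w) k v = fderiv ℝ (fun x => fderiv ℝ Q x) k v w := by
    intro v w
    rw [fderiv_clm_apply hQ'd (differentiableAt_const _)]
    simp
  -- symmetry of the second derivative
  have hsymm : fderiv ℝ (fun x => fderiv ℝ Q x) k (0,1) (1,0)
      = fderiv ℝ (fun x => fderiv ℝ Q x) k (1,0) (0,1) :=
    hQk.isSymmSndFDerivAt (by rw [minSmoothness_of_isRCLikeNormedField]; exact two_le_top') (0,1) (1,0)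
  -- differentiating the orthogonality relations
  have horthD : ∀ v w : ℝ × ℝ,
      (∀ j ∈ U, ⟪nu j, fderiv ℝ Q j w⟫ = 0) →
      ⟪nu k, fderiv ℝ (fun x => fderiv ℝ Q x) k v w⟫ + ⟪fderiv ℝ nu k v, fderiv ℝ Q k w⟫ = 0 := by
    intro v w h0
    have hgd : DifferentiableAt ℝ (fun x => fderiv ℝ Q x w) k :=
      hQ'd.clm_apply (differentiableAt_const _)
    have heq : (fun j => ⟪nu j, fderiv ℝ Q j w⟫) =ᶠ[nhds k] (fun _ => (0:ℝ)) := by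
      filter_upwards [hkU] with j hj using h0 j hj
    have heq' : fderiv ℝ (fun j => ⟪nu j, fderiv ℝ Q j w⟫) k = fderiv ℝ (fun _ => (0:ℝ)) k :=
      heq.fderiv_eq
    have hz : fderiv ℝ (fun j => ⟪nu j, fderiv ℝ Q j w⟫) k v = 0 := by
      rw [heq', fderiv_fun_const]; simp
    rw [fderiv_inner_apply (𝕜 := ℝ) hnud hgd v] at hz
    rw [← hclm v w]
    linarith [hz]
  have h1 : ⟪nu k, fderiv ℝ (fun x => fderiv ℝ Q x) k (0,1) (1,0)⟫
      + ⟪fderiv ℝ nu k (0,1), D1 Q k⟫ = 0 :=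
    horthD (0,1) (1,0) (fun j hj => (horth j hj).1)
  have h2 : ⟪nu k, fderiv ℝ (fun x => fderiv ℝ Q x) k (1,0) (0,1)⟫
      + ⟪fderiv ℝ nu k (1,0), D2 Q k⟫ = 0 :=
    horthD (1,0) (0,1) (fun j hj => (horth j hj).2)
  -- the key cross-derivative identity
  have hcross : ⟪D1 Q k, fderiv ℝ nu k (0,1)⟫ = ⟪D2 Q k, fderiv ℝ nu k (1,0)⟫ := by
    rw [hsymm] at h1
    have ha := real_inner_comm (fderiv ℝ nu k (0,1)) (D1 Q k)
    have hb := real_inner_comm (fderiv ℝ nu k (1,0)) (D2 Q k)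
    linarith [h1, h2, ha, hb]
  -- the Snell scalar
  set c : ℝ × ℝ → ℝ := fun j => n₂ * ⟪u₂ j, nu j⟫ - n₁ * ⟪u₁ j, nu j⟫ with hc
  have hcd : DifferentiableAt ℝ c k := by
    apply DifferentiableAt.sub
    · exact (hu₂d.inner (𝕜 := ℝ) hnud).const_mul n₂
    · exact (hu₁d.inner (𝕜 := ℝ) hnud).const_mul n₁
  -- the vector form of Snell's law
  have hw : ∀ j ∈ U, n₂ • u₂ j - n₁ • u₁ j = c j • nu j := by
    intro j hj
    have h := hsnell j hj
    rw [smul_sub, smul_sub, sub_eq_sub_iff_sub_eq_sub] at h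
    calc n₂ • u₂ j - n₁ • u₁ j
        = n₂ • (⟪u₂ j, nu j⟫ • nu j) - n₁ • (⟪u₁ j, nu j⟫ • nu j) := h
      _ = c j • nu j := by
          simp only [hc]
          rw [sub_smul, mul_smul, mul_smul]
  have hweq : (fun j => n₂ • u₂ j - n₁ • u₁ j) =ᶠ[nhds k] (fun j => c j • nu j) := by
    filter_upwards [hkU] with j hj using hw j hj
  have hwD : ∀ v : ℝ × ℝ,
      n₂ • fderiv ℝ u₂ k v - n₁ • fderiv ℝ u₁ k v
        = (fderiv ℝ c k v) • nu k + c k • fderiv ℝ nu k v := by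
    intro v
    have hL : fderiv ℝ (fun j => n₂ • u₂ j - n₁ • u₁ j) k v
        = n₂ • fderiv ℝ u₂ k v - n₁ • fderiv ℝ u₁ k v := by
      rw [fderiv_fun_sub (f := fun j => n₂ • u₂ j) (g := fun j => n₁ • u₁ j) (hu₂d.const_smul n₂) (hu₁d.const_smul n₁),
        fderiv_fun_const_smul hu₂d, fderiv_fun_const_smul hu₁d]
      simp
    have hR : fderiv ℝ (fun j => c j • nu j) k v
        = c k • fderiv ℝ nu k v + (fderiv ℝ c k v) • nu k := by
      rw [fderiv_fun_smul hcd hnud]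
      simp
    rw [← hL, hweq.fderiv_eq, hR]
    abel
  -- orthogonality at k
  have ho1 : ⟪D1 Q k, nu k⟫ = 0 := by rw [real_inner_comm]; exact (horth k hk).1
  have ho2 : ⟪D2 Q k, nu k⟫ = 0 := by rw [real_inner_comm]; exact (horth k hk).2
  -- take inner products of hwD with D1 Q and D2 Q
  have key1 : n₂ * ⟪D1 Q k, D2 u₂ k⟫ - n₁ * ⟪D1 Q k, D2 u₁ k⟫
      = c k * ⟪D1 Q k, fderiv ℝ nu k (0,1)⟫ := by
    have := congrArg (fun z => ⟪D1 Q k, z⟫) (hwD (0,1))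
    simpa [inner_sub_right, inner_add_right, inner_smul_right, ho1, D2] using this
  have key2 : n₂ * ⟪D2 Q k, D1 u₂ k⟫ - n₁ * ⟪D2 Q k, D1 u₁ k⟫
      = c k * ⟪D2 Q k, fderiv ℝ nu k (1,0)⟫ := by
    have := congrArg (fun z => ⟪D2 Q k, z⟫) (hwD (1,0))
    simpa [inner_sub_right, inner_add_right, inner_smul_right, ho2, D1] using this
  have : n₂ * ⟪D1 Q k, D2 u₂ k⟫ - n₁ * ⟪D1 Q k, D2 u₁ k⟫
      = n₂ * ⟪D2 Q k, D1 u₂ k⟫ - n₁ * ⟪D2 Q k, D1 u₁ k⟫ := by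
    rw [key1, key2, hcross]
  simp only [smul_eq_mul]
  ring_nf
  ring_nf at this
  linarith [this]
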